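/- Let N ≥ 1, let α ∈ (0,1), and let T : ℝ^N → ℝ^N be an α-averaged operator. Let η₁, η₂ ∈ (0, 1/α], let x ∈ ℝ^N, and set y = η₁·T(x) + (1−η₁)·x and z = η₂·T(y) + (1−η₂)·y. Then ‖z − y‖ ≤ (η₂/η₁)·‖y − x‖. -/

import Mathlib

set_option maxHeartbeats 800000

open Filter Topology
open scoped RealInnerProductSpace

/-- `T` is an `α`-averaged operator on `ℝ^N` (Euclidean norm). -/
def IsAveragedOp {N : ℕ} (α : ℝ)
    (T : EuclideanSpace ℝ (Fin N) → EuclideanSpace ℝ (Fin N)) : Prop :=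
  ∀ x y : EuclideanSpace ℝ (Fin N),
    ‖T x - T y‖ ^ 2 + ((1 - α) / α) * ‖(x - T x) - (y - T y)‖ ^ 2 ≤ ‖x - y‖ ^ 2

/-- Key estimate for the ORM rate estimator: two successive relaxed steps with parameters
`η₁, η₂ ∈ (0, 1/α]` satisfy `‖z − y‖ ≤ (η₂/η₁) ‖y − x‖`. -/
theorem stmt_15 {N : ℕ} (hN : 1 ≤ N) {α : ℝ} (hα : α ∈ Set.Ioo (0 : ℝ) 1)
    (T : EuclideanSpace ℝ (Fin N) → EuclideanSpace ℝ (Fin N))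
    (hT : IsAveragedOp α T)
    (η₁ η₂ : ℝ) (hη₁ : η₁ ∈ Set.Ioc (0 : ℝ) (1 / α)) (hη₂ : η₂ ∈ Set.Ioc (0 : ℝ) (1 / α))
    (x y z : EuclideanSpace ℝ (Fin N))
    (hy : y = η₁ • T x + (1 - η₁) • x)
    (hz : z = η₂ • T y + (1 - η₂) • y) :
    ‖z - y‖ ≤ (η₂ / η₁) * ‖y - x‖ := by
  obtain ⟨hα0, hα1⟩ := hα
  obtain ⟨hη₁0, hη₁le⟩ := hη₁
  obtain ⟨hη₂0, hη₂le⟩ := hη₂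
  set r : EuclideanSpace ℝ (Fin N) := T x - x with hr
  set s : EuclideanSpace ℝ (Fin N) := T y - y with hs
  have hyx : y - x = η₁ • r := by rw [hy, hr]; module
  have hzy : z - y = η₂ • s := by rw [hz, hs]; module
  have h1 : T x - T y = (1 - η₁) • r - s := by
    rw [hr, hs, hy]; module
  have h2 : (x - T x) - (y - T y) = s - r := by
    rw [hr, hs]; module
  have h3 : x - y = -(η₁ • r) := by rw [hyx.symm]; abel
  have key := hT x y
  rw [h1, h2, h3] at key
  set a := ‖r‖ with ha
  set b := ‖s‖ with hb
  have hip : ⟪r, s⟫ ≤ a * b := real_inner_le_norm r s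
  have e1 : ‖(1 - η₁) • r - s‖ ^ 2 = (1 - η₁) ^ 2 * a ^ 2 - 2 * (1 - η₁) * ⟪r, s⟫ + b ^ 2 := by
    rw [norm_sub_sq_real, norm_smul, real_inner_smul_left]
    simp [abs_mul_abs_self, mul_pow]
    ring
  have e2 : ‖s - r‖ ^ 2 = b ^ 2 - 2 * ⟪r, s⟫ + a ^ 2 := by
    rw [norm_sub_sq_real, real_inner_comm]
  have e3 : ‖-(η₁ • r)‖ ^ 2 = η₁ ^ 2 * a ^ 2 := by
    rw [norm_neg, norm_smul, Real.norm_eq_abs, mul_pow, sq_abs]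
  rw [e1, e2, e3] at key
  have ha0 : 0 ≤ a := norm_nonneg r
  have hb0 : 0 ≤ b := norm_nonneg s
  have hc : (1 - α) / α = 1 / α - 1 := by
    rw [sub_div, div_self hα0.ne', one_div]
  rw [hc] at key
  have hβ : 0 ≤ 1 / α - η₁ := by linarith
  have hq1 : (1 / α) * b ^ 2 - 2 * (1 / α - η₁) * ⟪r, s⟫ + (1 / α - 2 * η₁) * a ^ 2 ≤ 0 := by
    nlinarith [key]
  have hmul : 2 * (1 / α - η₁) * ⟪r, s⟫ ≤ 2 * (1 / α - η₁) * (a * b) := by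
    apply mul_le_mul_of_nonneg_left hip
    linarith
  have hq2 : (1 / α) * b ^ 2 - 2 * (1 / α - η₁) * (a * b) + (1 / α - 2 * η₁) * a ^ 2 ≤ 0 := by
    linarith
  have hba : b ≤ a := by
    by_contra hcon
    push_neg at hcon
    have hγpos : 0 < 1 / α := by positivity
    have hba' : 0 < b - a := by linarith
    linarith [mul_pos hγpos (mul_pos hba' hba'),
      mul_nonneg (mul_nonneg hη₁0.le ha0) hba'.le]
  rw [hyx, hzy, norm_smul, norm_smul]
  simp only [Real.norm_eq_abs, abs_of_pos hη₁0, abs_of_pos hη₂0]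
  have h4 : η₂ / η₁ * (η₁ * ‖r‖) = η₂ * ‖r‖ := by
    field_simp
  rw [h4]
  exact mul_le_mul_of_nonneg_left hba hη₂0.le
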